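/- Let η be a random variable with density p(x), A a measurable set with P(η ∈ Aᶜ) ≤ ε < 1, and let ξ have density p(x)·1_A(x)/P(A). If ψ is measurable with E[ψ(η)²] < ∞, then |E[ψ(ξ)] − E[ψ(η)]| ≤ 2√(E[ψ(η)²])·√ε/(1 − ε). -/

import Mathlib

open MeasureTheory ProbabilityTheory
open scoped ENNReal

lemma cs_aux {S : Type*} [MeasurableSpace S] (ν : Measure S) [IsFiniteMeasure ν]
    (ψ : S → ℝ) (hψ : Measurable ψ) (h2 : Integrable (fun x => ψ x ^ 2) ν) :
    |∫ x, ψ x ∂ν| ≤ Real.sqrt (∫ x, ψ x ^ 2 ∂ν) * Real.sqrt ((ν Set.univ).toReal) := by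
  have hm2 : MemLp ψ 2 ν := (memLp_two_iff_integrable_sq hψ.aestronglyMeasurable).2 h2
  have hint : Integrable ψ ν := hm2.integrable one_le_two
  have h1 : |∫ x, ψ x ∂ν| ≤ ∫ x, |ψ x| ∂ν := by
    simpa [Real.norm_eq_abs] using norm_integral_le_integral_norm (μ := ν) ψ
  have hconj : Real.HolderConjugate 2 2 := Real.HolderConjugate.two_two
  have key := integral_mul_le_Lp_mul_Lq_of_nonneg hconj
    (f := fun x => |ψ x|) (g := fun _ => (1:ℝ))
    (Filter.Eventually.of_forall fun x => abs_nonneg _)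
    (Filter.Eventually.of_forall fun x => zero_le_one)
    (by have habs : MemLp (fun x => |ψ x|) 2 ν := hm2.abs; simpa [ENNReal.ofReal_ofNat] using habs)
    (by simpa [ENNReal.ofReal_ofNat] using (memLp_const (1:ℝ) : MemLp _ 2 ν))
  simp only [mul_one] at key
  have e1 : ∫ a, |ψ a| ^ (2:ℝ) ∂ν = ∫ x, ψ x ^ 2 ∂ν := by
    refine integral_congr_ae (Filter.Eventually.of_forall fun x => ?_)
    beta_reduce
    rw [show ((2:ℝ)) = ((2:ℕ):ℝ) by norm_num, Real.rpow_natCast, sq_abs]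
  have e2 : ∫ (_ : S), (1:ℝ) ^ (2:ℝ) ∂ν = (ν Set.univ).toReal := by
    simp [Real.one_rpow, Measure.real]
  rw [e1, e2] at key
  calc |∫ x, ψ x ∂ν| ≤ ∫ x, |ψ x| ∂ν := h1
    _ ≤ (∫ x, ψ x ^ 2 ∂ν) ^ (1/2 : ℝ) * ((ν Set.univ).toReal) ^ (1/2 : ℝ) := key
    _ = _ := by rw [Real.sqrt_eq_rpow, Real.sqrt_eq_rpow]

/-- Truncation lemma: if η has law μ, A is measurable with P(η ∈ Aᶜ) ≤ ε < 1 and ξ has the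
conditional law μ(·|A), then for ψ measurable with E[ψ(η)²] < ∞,
|E[ψ(ξ)] − E[ψ(η)]| ≤ 2√(E[ψ(η)²])·√ε/(1 − ε). -/
theorem truncation_lemma_sq
    {S : Type*} [MeasurableSpace S] (μ : Measure S) [IsProbabilityMeasure μ]
    (A : Set S) (hA : MeasurableSet A)
    (ε : ℝ) (hε0 : 0 ≤ ε) (hε1 : ε < 1)
    (hAc : (μ Aᶜ).toReal ≤ ε)
    (ψ : S → ℝ) (hψ : Measurable ψ)
    (hψ2 : Integrable (fun x => ψ x ^ 2) μ) :
    |∫ x, ψ x ∂(μ[|A]) - ∫ x, ψ x ∂μ|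
      ≤ 2 * Real.sqrt (∫ x, ψ x ^ 2 ∂μ) * Real.sqrt ε / (1 - ε) := by
  have hm2 : MemLp ψ 2 μ := (memLp_two_iff_integrable_sq hψ.aestronglyMeasurable).2 hψ2
  have hint : Integrable ψ μ := hm2.integrable one_le_two
  set c := (μ A).toReal with hc_def
  set d := (μ Aᶜ).toReal with hd_def
  have hd1 : μ Aᶜ ≤ 1 := prob_le_one
  have hcd : c = 1 - d := by
    have h' : μ A = 1 - μ Aᶜ := by
      have h2 := prob_compl_eq_one_sub (μ := μ) hA.compl
      rwa [compl_compl] at h2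
    rw [hc_def, hd_def, h', ENNReal.toReal_sub_of_le hd1 ENNReal.one_ne_top,
      ENNReal.toReal_one]
  have hd0 : 0 ≤ d := ENNReal.toReal_nonneg
  have hc_pos : 0 < c := by rw [hcd]; linarith
  have h1ε : (0:ℝ) < 1 - ε := by linarith
  have hc_ge : 1 - ε ≤ c := by rw [hcd]; linarith
  have hc_le1 : c ≤ 1 := by rw [hcd]; linarith
  set IA := ∫ x in A, ψ x ∂μ with hIA_def
  set IC := ∫ x in Aᶜ, ψ x ∂μ with hIC_def
  set I2 := ∫ x, ψ x ^ 2 ∂μ with hI2_def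
  set s := Real.sqrt I2 with hs_def
  have hs0 : 0 ≤ s := Real.sqrt_nonneg _
  have hcond : ∫ x, ψ x ∂(μ[|A]) = c⁻¹ * IA := by
    rw [ProbabilityTheory.cond, integral_smul_measure, ENNReal.toReal_inv, smul_eq_mul]
  have hsplit : ∫ x, ψ x ∂μ = IA + IC := (integral_add_compl hA hint).symm
  have hψ2nn : 0 ≤ᵐ[μ] fun x => ψ x ^ 2 := Filter.Eventually.of_forall fun x => sq_nonneg _
  -- bound on |IA|
  have hIA_bdd : |IA| ≤ s := by
    calc |IA| ≤ Real.sqrt (∫ x in A, ψ x ^ 2 ∂μ) * Real.sqrt (((μ.restrict A) Set.univ).toReal) :=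
          cs_aux (μ.restrict A) ψ hψ (hψ2.restrict)
      _ ≤ s * 1 := by
          apply mul_le_mul
          · exact Real.sqrt_le_sqrt (setIntegral_le_integral hψ2 hψ2nn)
          · rw [Measure.restrict_apply_univ]
            exact Real.sqrt_le_one.2 (by simpa using ENNReal.toReal_mono ENNReal.one_ne_top prob_le_one)
          · exact Real.sqrt_nonneg _
          · exact hs0
      _ = s := mul_one s
  -- bound on |IC|
  have hIC_bdd : |IC| ≤ s * Real.sqrt ε := by
    calc |IC| ≤ Real.sqrt (∫ x in Aᶜ, ψ x ^ 2 ∂μ) * Real.sqrt (((μ.restrict Aᶜ) Set.univ).toReal) :=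
          cs_aux (μ.restrict Aᶜ) ψ hψ (hψ2.restrict)
      _ ≤ s * Real.sqrt ε := by
          apply mul_le_mul
          · exact Real.sqrt_le_sqrt (setIntegral_le_integral hψ2 hψ2nn)
          · rw [Measure.restrict_apply_univ]
            exact Real.sqrt_le_sqrt hAc
          · exact Real.sqrt_nonneg _
          · exact hs0
  have hrear : ∫ x, ψ x ∂(μ[|A]) - ∫ x, ψ x ∂μ = (c⁻¹ - 1) * IA - IC := by
    rw [hcond, hsplit]; ring
  have hcinv : c⁻¹ - 1 ≤ ε / (1 - ε) := by
    have h1 : c⁻¹ - 1 = (1 - c) / c := by field_simp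
    rw [h1]
    apply div_le_div₀ (by linarith) (by rw [hcd]; linarith) (by linarith) hc_ge
  have hcinv0 : 0 ≤ c⁻¹ - 1 := by
    have := inv_anti₀ hc_pos hc_le1
    simpa using this
  have hsqε : ε ≤ Real.sqrt ε := by
    have ht1 : Real.sqrt ε ≤ 1 := Real.sqrt_le_one.2 hε1.le
    nlinarith [Real.sq_sqrt hε0, Real.sqrt_nonneg ε]
  have hsqε0 : 0 ≤ Real.sqrt ε := Real.sqrt_nonneg _
  calc |∫ x, ψ x ∂(μ[|A]) - ∫ x, ψ x ∂μ| = |(c⁻¹ - 1) * IA - IC| := by rw [hrear]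
    _ ≤ |(c⁻¹ - 1) * IA| + |IC| := abs_sub _ _
    _ = (c⁻¹ - 1) * |IA| + |IC| := by rw [abs_mul, abs_of_nonneg hcinv0]
    _ ≤ (ε / (1 - ε)) * s + s * Real.sqrt ε := by
        apply add_le_add _ hIC_bdd
        exact mul_le_mul hcinv hIA_bdd (abs_nonneg _) (by positivity)
    _ ≤ 2 * s * Real.sqrt ε / (1 - ε) := by
        rw [div_mul_eq_mul_div, div_add' _ _ _ (ne_of_gt h1ε), div_le_div_iff₀ h1ε h1ε]
        have key : ε * s + s * Real.sqrt ε * (1 - ε) ≤ 2 * s * Real.sqrt ε := by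
          nlinarith [mul_nonneg (mul_nonneg hs0 hsqε0) hε0,
            mul_nonneg hs0 (sub_nonneg.2 hsqε)]
        nlinarith [mul_le_mul_of_nonneg_right key h1ε.le]
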